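/- Let n ≥ 1 be an integer and let μ be a nonnegative Borel measure on B satisfying ∫_B (1−|w|²)^n dμ(w) < ∞. Then for every 0 < r < 1 and every ξ ∈ S: G_μ(rξ) ≥ ((n+1)/(4^{n+1} n²)) · λ(C(ξ, 1−r)) / (1−r)^n. -/

import Mathlib

open MeasureTheory Metric Set
open scoped ENNReal ComplexConjugate

noncomputable section

instance euclideanComplexMeasurableSpace {n : ℕ} :
    MeasurableSpace (EuclideanSpace ℂ (Fin n)) := borel _

instance euclideanComplexBorelSpace {n : ℕ} :
    BorelSpace (EuclideanSpace ℂ (Fin n)) := ⟨rfl⟩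

/-- The Hermitian inner product `⟨z,w⟩ = ∑ j, z j * conj (w j)` from the paper. -/
def hip {n : ℕ} (z w : EuclideanSpace ℂ (Fin n)) : ℂ :=
  ∑ j, z j * (starRingEnd ℂ) (w j)

/-- Orthogonal projection `P_w` onto the complex line spanned by `w`
(equal to `0` when `w = 0`). -/
def Pw {n : ℕ} (w z : EuclideanSpace ℂ (Fin n)) : EuclideanSpace ℂ (Fin n) :=
  ((hip z w) / ((‖w‖ : ℂ) ^ 2)) • w

/-- The involutive automorphism `φ_w` of the unit ball. -/
def phi {n : ℕ} (w z : EuclideanSpace ℂ (Fin n)) : EuclideanSpace ℂ (Fin n) :=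
  (1 - hip z w)⁻¹ • (w - Pw w z - ((Real.sqrt (1 - ‖w‖ ^ 2) : ℝ) : ℂ) • (z - Pw w z))

/-- The radial function `g(z) = ((n+1)/(2n)) ∫_{|z|}^1 (1-t²)^{n-1} t^{-2n+1} dt`. -/
def gfun (n : ℕ) (z : EuclideanSpace ℂ (Fin n)) : ℝ :=
  ((n + 1) / (2 * n)) * ∫ t in (‖z‖)..(1 : ℝ), (1 - t ^ 2) ^ (n - 1) * t ^ (-2 * (n : ℤ) + 1)

/-- Green's function for the invariant Laplacian: `G(z,w) = g(φ_w(z))`. -/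
def Gker {n : ℕ} (z w : EuclideanSpace ℂ (Fin n)) : ℝ := gfun n (phi w z)

/-- The invariant Green potential of `μ`, as an `ℝ≥0∞`-valued function. -/
def Gpot {n : ℕ} (μ : Measure (EuclideanSpace ℂ (Fin n)))
    (z : EuclideanSpace ℂ (Fin n)) : ℝ≥0∞ :=
  ∫⁻ w in ball (0 : EuclideanSpace ℂ (Fin n)) 1, ENNReal.ofReal (Gker z w) ∂μ

/-- Surface measure on the unit sphere of `ℂⁿ`, normalized so that `σ(S) = 1`. -/
def sigmaS (n : ℕ) : Measure (sphere (0 : EuclideanSpace ℂ (Fin n)) 1) :=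
  ((volume : Measure (EuclideanSpace ℂ (Fin n))).toSphere univ)⁻¹ •
    (volume : Measure (EuclideanSpace ℂ (Fin n))).toSphere

/-- The Korányi region `C(ξ,δ) = {z ∈ B : |1 - ⟨z,ξ⟩| < δ}`. -/
def Cset {n : ℕ} (ξ : EuclideanSpace ℂ (Fin n)) (δ : ℝ) : Set (EuclideanSpace ℂ (Fin n)) :=
  {z | z ∈ ball (0 : EuclideanSpace ℂ (Fin n)) 1 ∧ ‖1 - hip z ξ‖ < δ}

/-- The weighted measure `λ(E) = ∫_E (1-|w|)^n dμ(w)`. -/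
def lamRM {n : ℕ} (μ : Measure (EuclideanSpace ℂ (Fin n)))
    (E : Set (EuclideanSpace ℂ (Fin n))) : ℝ≥0∞ :=
  ∫⁻ w in E, ENNReal.ofReal ((1 - ‖w‖) ^ n) ∂μ

/-- The `p`-th mean `m_p(r, G_μ)` of the Green potential over the unit sphere. -/
def mpG {n : ℕ} (p : ℝ) (μ : Measure (EuclideanSpace ℂ (Fin n))) (r : ℝ) : ℝ≥0∞ :=
  (∫⁻ ξ, (Gpot μ (r • (ξ : EuclideanSpace ℂ (Fin n)))) ^ p ∂(sigmaS n)) ^ (1 / p)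

/-- The anisotropic ball `D(ξ,δ) = {η ∈ S : d(ξ,η) < δ}` on the unit sphere,
where `d(a,b) = |1 - ⟨a,b⟩|^{1/2}`. -/
def Dset {n : ℕ} (ξ : sphere (0 : EuclideanSpace ℂ (Fin n)) 1) (δ : ℝ) :
    Set (sphere (0 : EuclideanSpace ℂ (Fin n)) 1) :=
  {η | ‖1 - hip (η : EuclideanSpace ℂ (Fin n)) (ξ : EuclideanSpace ℂ (Fin n))‖ < δ ^ 2}

/- ### auxiliary lemmas -/

lemma hip_inner {n : ℕ} (z w : EuclideanSpace ℂ (Fin n)) : hip z w = (inner ℂ w z : ℂ) := by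
  simp [hip, PiLp.inner_apply, mul_comm]

lemma hip_smul {n : ℕ} (r : ℝ) (ξ w : EuclideanSpace ℂ (Fin n)) :
    hip (r • ξ) w = (r : ℂ) * hip ξ w := by
  simp [hip, Finset.mul_sum, PiLp.smul_apply, Complex.real_smul, mul_assoc]

lemma hip_conj {n : ℕ} (z w : EuclideanSpace ℂ (Fin n)) : hip z w = conj (hip w z) := by
  simp [hip, mul_comm]

lemma abs_hip_le {n : ℕ} (z w : EuclideanSpace ℂ (Fin n)) :
    ‖hip z w‖ ≤ ‖z‖ * ‖w‖ := by
  rw [hip_inner]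
  exact (norm_inner_le_norm w z).trans_eq (mul_comm _ _)

lemma hip_continuous {n : ℕ} (ξ : EuclideanSpace ℂ (Fin n)) :
    Continuous fun z : EuclideanSpace ℂ (Fin n) => hip z ξ := by
  unfold hip
  exact continuous_finset_sum _ fun j _ =>
    ((continuous_apply j).comp (PiLp.continuous_ofLp 2 _)).mul continuous_const

lemma key_identity {n : ℕ} (w z : EuclideanSpace ℂ (Fin n)) (hw : ‖w‖ < 1)
    (ha : (1:ℂ) - hip z w ≠ 0) :
    (1 - ‖phi w z‖^2) * Complex.normSq (1 - hip z w) = (1 - ‖z‖^2) * (1 - ‖w‖^2) := by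
  by_cases hw0 : w = 0
  · subst hw0
    have h0 : hip z (0 : EuclideanSpace ℂ (Fin n)) = 0 := by simp [hip]
    simp [phi, Pw, h0, norm_smul]
  · have hWpos : (0:ℝ) < ‖w‖ := norm_pos_iff.mpr hw0
    set W : ℝ := ‖w‖ with hWdef
    set a : ℂ := hip z w with hadef
    have hW2 : ((W:ℂ))^2 ≠ 0 := pow_ne_zero _ (Complex.ofReal_ne_zero.mpr hWpos.ne')
    set c : ℂ := a / ((W:ℂ)^2) with hc
    set A : ℝ := Complex.normSq a with hA
    have hinner_wz : (inner ℂ w z : ℂ) = a := (hip_inner z w).symm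
    have hww : (inner ℂ w w : ℂ) = ((W:ℂ))^2 := by
      rw [inner_self_eq_norm_sq_to_K, ← hWdef]; norm_num
    have hwc : (inner ℂ w (c • w) : ℂ) = a := by
      rw [inner_smul_right, hww, hc]; exact div_mul_cancel₀ a hW2
    have horth : (inner ℂ w (z - c • w) : ℂ) = 0 := by
      rw [inner_sub_right, hinner_wz, hwc, sub_self]
    have hcross : (inner ℂ (w - c • w) (((Real.sqrt (1 - W^2) : ℝ):ℂ) • (z - c • w)) : ℂ) = 0 := by
      rw [inner_smul_right, inner_sub_left, inner_smul_left, horth]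
      ring
    have hzw : (inner ℂ z w : ℂ) = conj a := by
      rw [← hinner_wz, inner_conj_symm]
    have hzc : (inner ℂ z (c • w) : ℂ) = ((A / W^2 : ℝ) : ℂ) := by
      rw [inner_smul_right, hzw, hc, div_mul_eq_mul_div, Complex.mul_conj, ← hA]
      push_cast; ring
    have hnormSqc : Complex.normSq c = A / (W^2 * W^2) := by
      rw [hc, Complex.normSq_div, show ((W:ℂ)^2) = ((W^2:ℝ):ℂ) from by push_cast; ring,
        Complex.normSq_ofReal, hA]
    have hncw : ‖c • w‖^2 = A / W^2 := by
      rw [norm_smul, mul_pow, ← hWdef, Complex.sq_norm, hnormSqc]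
      field_simp
    have hs2 : Real.sqrt (1 - W^2) ^ 2 = 1 - W^2 :=
      Real.sq_sqrt (by nlinarith)
    have hnzc : ‖z - c • w‖^2 = ‖z‖^2 - A / W^2 := by
      rw [@norm_sub_sq ℂ, hzc, hncw]
      simp only [RCLike.re_to_complex, Complex.ofReal_re]
      ring
    have hnwc : ‖w - c • w‖^2 = W^2 - 2 * a.re + A / W^2 := by
      rw [@norm_sub_sq ℂ, hwc, hncw, ← hWdef]
      simp
    have hnv : ‖(w - c • w) - ((Real.sqrt (1 - W^2) : ℝ):ℂ) • (z - c • w)‖^2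
        = ‖w - c • w‖^2 + (1 - W^2) * ‖z - c • w‖^2 := by
      rw [@norm_sub_sq ℂ, hcross]
      rw [norm_smul]
      simp only [Complex.norm_real, Real.norm_eq_abs, map_zero, mul_zero, Complex.zero_re]
      rw [mul_pow, sq_abs, hs2]
      ring
    have hphi : phi w z = (1 - a)⁻¹ • ((w - c • w) - ((Real.sqrt (1 - W^2) : ℝ):ℂ) • (z - c • w)) := by
      rw [phi, Pw, ← hadef, ← hWdef, ← hc]
    have hnphi : ‖phi w z‖^2 * Complex.normSq (1 - a)
        = ‖w - c • w‖^2 + (1 - W^2) * ‖z - c • w‖^2 := by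
      rw [hphi, norm_smul, mul_pow, norm_inv, hnv, ← Complex.sq_norm]
      have h0 : ‖1 - a‖ ≠ 0 := norm_ne_zero_iff.mpr ha
      field_simp
    have hNa : Complex.normSq (1 - a) = 1 - 2 * a.re + A := by
      rw [hA, Complex.normSq_apply, Complex.normSq_apply]
      simp [Complex.sub_re, Complex.sub_im]
      ring
    have expand : (1 - ‖phi w z‖^2) * Complex.normSq (1 - a)
        = Complex.normSq (1 - a) - (‖w - c • w‖^2 + (1 - W^2) * ‖z - c • w‖^2) := by
      rw [← hnphi]; ring
    rw [expand, hNa, hnwc, hnzc]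
    field_simp
    ring

lemma gfun_lb {n : ℕ} (hn : 1 ≤ n) (v : EuclideanSpace ℂ (Fin n))
    (h0 : 0 < ‖v‖) (h1 : ‖v‖ ≤ 1) :
    ((n:ℝ)+1)/(4*(n:ℝ)^2) * (1-‖v‖^2)^n ≤ gfun n v := by
  set ρ : ℝ := ‖v‖ with hρ
  have hne : (n:ℝ) ≠ 0 := Nat.cast_ne_zero.mpr (by omega)
  have hmem : ∀ t ∈ uIcc ρ (1:ℝ), 0 < t ∧ t ≤ 1 := by
    intro t ht
    rw [uIcc_of_le h1] at ht
    exact ⟨lt_of_lt_of_le h0 ht.1, ht.2⟩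
  have key2 : ∫ t in ρ..1, (1-t^2)^(n-1) * t = (1-ρ^2)^n / (2*n) := by
    have hF : ∀ t ∈ uIcc ρ (1:ℝ), HasDerivAt (fun t : ℝ => -((1-t^2)^n) / (2*n))
        ((1-t^2)^(n-1) * t) t := by
      intro t _
      have h1 : HasDerivAt (fun t : ℝ => 1 - t^2) (-(2*t)) t := by
        simpa using ((hasDerivAt_pow 2 t).const_sub 1)
      have h2 : HasDerivAt (fun t : ℝ => (1-t^2)^n) ((n:ℝ) * (1-t^2)^(n-1) * (-(2*t))) t :=
        h1.pow n
      have h3 := (h2.neg).div_const (2*(n:ℝ))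
      convert h3 using 1
      · rfl
      · rfl
      · rfl
      · field_simp
    have hint : IntervalIntegrable (fun t : ℝ => (1-t^2)^(n-1) * t) volume ρ 1 :=
      (Continuous.mul (by continuity) continuous_id).intervalIntegrable _ _
    rw [intervalIntegral.integral_eq_sub_of_hasDerivAt hF hint]
    have : ((1:ℝ) - 1^2)^n = 0 := by
      rw [show (1:ℝ) - 1^2 = 0 by norm_num, zero_pow (by omega)]
    rw [this]
    ring
  have key1 : ∫ t in ρ..1, (1-t^2)^(n-1) * t ≤ ∫ t in ρ..1, (1-t^2)^(n-1) * t ^ (-2*(n:ℤ)+1) := by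
    apply intervalIntegral.integral_mono_on h1
    · exact (Continuous.mul (by continuity) continuous_id).intervalIntegrable _ _
    · apply ContinuousOn.intervalIntegrable
      apply ContinuousOn.mul (by fun_prop)
      exact fun t ht => (continuousAt_zpow₀ _ _ (Or.inl (hmem t ht).1.ne')).continuousWithinAt
    · intro t ht
      have ht0 : 0 < t := lt_of_lt_of_le h0 ht.1
      have ht1 : t ≤ 1 := ht.2
      have hb : (0:ℝ) ≤ (1-t^2)^(n-1) := pow_nonneg (by nlinarith) _
      have : t ^ (1:ℤ) ≤ t ^ (-2*(n:ℤ)+1) :=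
        zpow_le_zpow_right_of_le_one₀ ht0 ht1 (by omega)
      rw [zpow_one] at this
      exact mul_le_mul_of_nonneg_left this hb
  calc ((n:ℝ)+1)/(4*(n:ℝ)^2) * (1-ρ^2)^n
      = ((n:ℝ)+1)/(2*n) * ((1-ρ^2)^n / (2*n)) := by
        rw [div_mul_div_comm, mul_div_assoc]; ring_nf
    _ ≤ gfun n v := by
        rw [gfun, ← hρ, ← key2]
        exact mul_le_mul_of_nonneg_left key1 (by positivity)

lemma aux_eq {r wn : ℝ} (hr0 : 0 < r) (hr1 : r < 1) (hwn : 0 ≤ wn) (hw1 : wn < 1)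
    {a : ℂ} (habsa : ‖a‖ ≤ r * wn)
    (hN : Complex.normSq (1 - a) = (1 - r^2) * (1 - wn^2)) :
    wn = r ∧ a = ((r^2:ℝ):ℂ) := by
  set u := ‖a‖ with hudef
  have hunn : 0 ≤ u := norm_nonneg a
  have hu1 : u < 1 := by nlinarith
  have h1u : 1 - u ≤ ‖1 - a‖ := by
    have := norm_sub_norm_le (1:ℂ) a
    simpa [hudef] using this
  have hsqN : ‖1 - a‖^2 = (1-r^2)*(1-wn^2) := by rw [Complex.sq_norm, hN]
  have h1uN : (1-u)^2 ≤ (1-r^2)*(1-wn^2) := by nlinarith [norm_nonneg (1-a)]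
  have hsq0 : (r - wn)^2 ≤ 0 := by
    nlinarith [mul_nonneg (sub_nonneg.mpr habsa) (show (0:ℝ) ≤ 2 - u - r*wn by nlinarith)]
  have hwr : wn = r := by
    have h0 : (r - wn)^2 = 0 := le_antisymm hsq0 (sq_nonneg _)
    have h1 := pow_eq_zero_iff (n := 2) (by norm_num) |>.mp h0
    linarith [sub_eq_zero.mp h1]
  subst hwr
  refine ⟨rfl, ?_⟩
  have hu_le : u ≤ wn^2 := by nlinarith
  have hu_ge : wn^2 ≤ u := by
    by_contra hcon
    push_neg at hcon
    nlinarith [mul_pos (show (0:ℝ) < wn^2 - u by linarith)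
      (show (0:ℝ) < 2 - u - wn^2 by nlinarith)]
  have hu : u = wn^2 := le_antisymm hu_le hu_ge
  have habs1aeq : ‖1 - a‖ = 1 - wn^2 := by
    rw [← Real.sqrt_sq (norm_nonneg (1 - a)), hsqN,
      show (1-wn^2)*(1-wn^2) = (1-wn^2)^2 by ring, Real.sqrt_sq (by nlinarith)]
  have hre_le : a.re ≤ wn^2 := by
    have := Complex.re_le_norm a
    rw [← hudef, hu] at this
    linarith
  have hre_ge : wn^2 ≤ a.re := by
    have h3 := Complex.re_le_norm (1 - a)
    rw [habs1aeq, Complex.sub_re, Complex.one_re] at h3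
    linarith
  have hre : a.re = wn^2 := le_antisymm hre_le hre_ge
  have him : a.im = 0 := by
    have h5 : Complex.normSq a = u^2 := by rw [← Complex.sq_norm, hudef]
    rw [Complex.normSq_apply, hu, hre] at h5
    have h6 : a.im * a.im = 0 := by nlinarith [h5]
    exact mul_self_eq_zero.mp h6
  apply Complex.ext
  · rw [hre, Complex.ofReal_re]
  · rw [him, Complex.ofReal_im]

set_option maxHeartbeats 1000000 in
lemma Gker_lb {n : ℕ} (hn : 1 ≤ n) {r : ℝ} (hr0 : 0 < r) (hr1 : r < 1)
    {ξ w : EuclideanSpace ℂ (Fin n)} (hξ : ‖ξ‖ = 1) (hw : w ∈ Cset ξ (1-r)) :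
    ((n:ℝ)+1)/(4^(n+1)*(n:ℝ)^2)/(1-r)^n * (1-‖w‖)^n ≤ Gker (r • ξ) w := by
  have hne : (n:ℝ) ≠ 0 := Nat.cast_ne_zero.mpr (by omega)
  obtain ⟨hwball, hb⟩ := hw
  rw [mem_ball_zero_iff] at hwball
  set z : EuclideanSpace ℂ (Fin n) := r • ξ with hzdef
  have hz : ‖z‖ = r := by
    rw [hzdef, norm_smul, hξ, Real.norm_eq_abs, abs_of_pos hr0, mul_one]
  set b : ℂ := hip w ξ with hbdef
  have ha_eq : hip z w = (r:ℂ) * conj b := by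
    rw [hzdef, hip_smul, hip_conj ξ w, ← hbdef]
  set a : ℂ := hip z w with hadef
  have habsb : ‖b‖ ≤ ‖w‖ := by
    have := abs_hip_le w ξ
    rwa [hξ, mul_one] at this
  have habsa : ‖a‖ ≤ r * ‖w‖ := by
    rw [ha_eq, norm_mul, Complex.norm_real, Complex.norm_conj, Real.norm_eq_abs, abs_of_pos hr0]
    exact mul_le_mul_of_nonneg_left habsb hr0.le
  have habsa1 : ‖a‖ < 1 := lt_of_le_of_lt habsa (by nlinarith)
  have ha : (1:ℂ) - a ≠ 0 := by
    intro h
    have h1 : a = 1 := (sub_eq_zero.mp h).symm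
    rw [h1] at habsa1
    simp at habsa1
  have habs1a : ‖1 - a‖ < 2 * (1 - r) := by
    have hsplit : (1:ℂ) - a = (1 - conj b) + ((1:ℂ) - (r:ℂ)) * conj b := by
      rw [ha_eq]; ring
    have h1 : ‖(1:ℂ) - conj b‖ = ‖1 - b‖ := by
      rw [show (1:ℂ) - conj b = conj (1 - b) by rw [map_sub, map_one], Complex.norm_conj]
    have h2 : ‖((1:ℂ) - (r:ℂ)) * conj b‖ ≤ (1 - r) * ‖w‖ := by
      rw [norm_mul, Complex.norm_conj, show (1:ℂ) - (r:ℂ) = ((1 - r : ℝ):ℂ) by push_cast; ring,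
        Complex.norm_real, Real.norm_eq_abs, abs_of_pos (by linarith)]
      exact mul_le_mul_of_nonneg_left habsb (by linarith)
    calc ‖1 - a‖ ≤ ‖(1:ℂ) - conj b‖ + ‖((1:ℂ) - (r:ℂ)) * conj b‖ := by
          rw [hsplit]; exact norm_add_le _ _
      _ < (1 - r) + (1 - r) := by
          rw [h1]
          have : (1 - r) * ‖w‖ ≤ (1 - r) * 1 := mul_le_mul_of_nonneg_left hwball.le (by linarith)
          have hb' : ‖1 - b‖ < 1 - r := hb
          linarith
      _ = 2 * (1 - r) := by ring
  set N : ℝ := Complex.normSq (1 - a) with hNdef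
  have hNpos : 0 < N := Complex.normSq_pos.mpr ha
  have hN4 : N < 4 * (1 - r)^2 := by
    rw [hNdef, ← Complex.sq_norm]
    nlinarith [norm_nonneg (1 - a)]
  have hid : (1 - ‖phi w z‖^2) * N = (1 - r^2) * (1 - ‖w‖^2) := by
    have := key_identity w z hwball ha
    rwa [hz] at this
  set ρ : ℝ := ‖phi w z‖ with hρdef
  have hρnn : 0 ≤ ρ := norm_nonneg _
  have hqpos : 0 < 1 - ρ^2 := by
    have hrhs : 0 < (1 - r^2) * (1 - ‖w‖^2) := mul_pos (by nlinarith) (by nlinarith [norm_nonneg w])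
    have heq : 1 - ρ^2 = (1 - r^2) * (1 - ‖w‖^2) / N := by
      rw [eq_div_iff hNpos.ne']; linarith [hid]
    rw [heq]; positivity
  have hρlt1 : ρ < 1 := by nlinarith
  have hρpos : 0 < ρ := by
    rcases hρnn.lt_or_eq with h | h
    · exact h
    exfalso
    have hρ0 : ρ = 0 := h.symm
    have hidN : Complex.normSq (1 - a) = (1 - r^2) * (1 - ‖w‖^2) := by
      rw [hρ0] at hid
      rw [hNdef] at hid
      simpa using hid
    obtain ⟨hwr, ha_val⟩ := aux_eq hr0 hr1 (norm_nonneg w) hwball habsa hidN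
    have hconjb : conj b = (r : ℂ) := by
      have hr_ne : (r : ℂ) ≠ 0 := Complex.ofReal_ne_zero.mpr hr0.ne'
      have heq2 := ha_eq
      rw [ha_val] at heq2
      rw [Complex.ofReal_pow, sq] at heq2
      exact (mul_left_cancel₀ hr_ne heq2.symm)
    have hbval : b = (r : ℂ) := by
      have := congrArg conj hconjb
      rwa [Complex.conj_conj, Complex.conj_ofReal] at this
    rw [hbval] at hb
    rw [show (1:ℂ) - (r:ℂ) = ((1 - r : ℝ):ℂ) by push_cast; ring, Complex.norm_real, Real.norm_eq_abs,
      abs_of_pos (by linarith)] at hb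
    linarith
  -- main estimate
  have hwnn : 0 ≤ ‖w‖ := norm_nonneg w
  have hM : (1-r)*(1-‖w‖) ≤ (1-r^2)*(1-‖w‖^2) := by
    have hD : 0 ≤ (1-r)*(1-‖w‖) := mul_nonneg (by linarith) (by linarith)
    nlinarith [mul_nonneg hD (by positivity : (0:ℝ) ≤ r + ‖w‖ + r*‖w‖)]
  have hfrac : (1-‖w‖)/(4*(1-r)) ≤ 1 - ρ^2 := by
    rw [div_le_iff₀ (by linarith : (0:ℝ) < 4*(1-r))]
    nlinarith [mul_lt_mul_of_pos_left hN4 hqpos]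
  have hpow : ((1-‖w‖)/(4*(1-r)))^n ≤ (1-ρ^2)^n :=
    pow_le_pow_left₀ (div_nonneg (by linarith) (by linarith)) hfrac n
  have hconst : ((n:ℝ)+1)/(4^(n+1)*(n:ℝ)^2)/(1-r)^n * (1-‖w‖)^n
      = ((n:ℝ)+1)/(4*(n:ℝ)^2) * (((1-‖w‖)/(4*(1-r)))^n) := by
    have h1 : ((1:ℝ)-r)^n ≠ 0 := pow_ne_zero _ (by linarith)
    have h4 : (4:ℝ)^n ≠ 0 := by positivity
    rw [div_pow, mul_pow, pow_succ]
    field_simp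
  rw [hconst]
  calc ((n:ℝ)+1)/(4*(n:ℝ)^2) * (((1-‖w‖)/(4*(1-r)))^n)
      ≤ ((n:ℝ)+1)/(4*(n:ℝ)^2) * (1-ρ^2)^n :=
        mul_le_mul_of_nonneg_left hpow (by positivity)
    _ ≤ gfun n (phi w z) := gfun_lb hn (phi w z) hρpos hρlt1.le
    _ = Gker (r • ξ) w := by rw [Gker, ← hzdef]

/-- Lower estimate for the Green potential:
`G_μ(rξ) ≥ ((n+1)/(4^{n+1} n²)) · λ(C(ξ,1-r))/(1-r)^n`. -/
theorem statement11 (n : ℕ) (hn : 1 ≤ n)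
    (μ : Measure (EuclideanSpace ℂ (Fin n)))
    (hμ : ∫⁻ w in ball (0 : EuclideanSpace ℂ (Fin n)) 1,
        ENNReal.ofReal ((1 - ‖w‖ ^ 2) ^ n) ∂μ < ⊤)
    (r : ℝ) (hr0 : 0 < r) (hr1 : r < 1)
    (ξ : EuclideanSpace ℂ (Fin n)) (hξ : ‖ξ‖ = 1) :
    ENNReal.ofReal (((n : ℝ) + 1) / (4 ^ (n + 1) * (n : ℝ) ^ 2) / (1 - r) ^ n) *
        lamRM μ (Cset ξ (1 - r))
      ≤ Gpot μ (r • ξ) := by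
  have hr' : (0:ℝ) < 1 - r := by linarith
  set C : ℝ := ((n : ℝ) + 1) / (4 ^ (n + 1) * (n : ℝ) ^ 2) / (1 - r) ^ n with hC
  have hC0 : 0 ≤ C := by positivity
  have hsub : Cset ξ (1 - r) ⊆ ball (0 : EuclideanSpace ℂ (Fin n)) 1 := fun w hw => hw.1
  have hmeas : MeasurableSet (Cset ξ (1 - r)) := by
    have hopen : IsOpen (Cset ξ (1 - r)) := by
      have heq : Cset ξ (1-r)
          = ball (0 : EuclideanSpace ℂ (Fin n)) 1 ∩ {z | ‖1 - hip z ξ‖ < 1 - r} := rfl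
      rw [heq]
      exact isOpen_ball.inter (isOpen_lt (continuous_norm.comp
        (continuous_const.sub (hip_continuous ξ))) continuous_const)
    exact hopen.measurableSet
  have step1 : ENNReal.ofReal C * lamRM μ (Cset ξ (1 - r))
      = ∫⁻ w in Cset ξ (1 - r), ENNReal.ofReal C * ENNReal.ofReal ((1 - ‖w‖) ^ n) ∂μ := by
    rw [lamRM, lintegral_const_mul' _ _ ENNReal.ofReal_ne_top]
  rw [step1]
  calc ∫⁻ w in Cset ξ (1 - r), ENNReal.ofReal C * ENNReal.ofReal ((1 - ‖w‖) ^ n) ∂μ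
      ≤ ∫⁻ w in Cset ξ (1 - r), ENNReal.ofReal (Gker (r • ξ) w) ∂μ := by
        apply setLIntegral_mono' hmeas
        intro w hw
        rw [← ENNReal.ofReal_mul hC0]
        exact ENNReal.ofReal_le_ofReal (Gker_lb hn hr0 hr1 hξ hw)
    _ ≤ Gpot μ (r • ξ) := by
        rw [Gpot]
        exact lintegral_mono' (Measure.restrict_mono hsub le_rfl) le_rfl
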